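/- Let G be a finite group of order 48 whose Sylow 3-subgroup is normal, and let P be a Sylow 2-subgroup of G. Then there exists an injective group homomorphism from G into P × S₃. -/

import Mathlib

lemma fact48_2 : Nat.factorization 48 2 = 4 := by
  rw [show (48:ℕ) = 2^4*3 by norm_num, Nat.factorization_mul (by norm_num) (by norm_num)]
  rw [Nat.factorization_pow, Nat.Prime.factorization (by norm_num),
    Nat.Prime.factorization (by norm_num)]
  simp

lemma fact48_3 : Nat.factorization 48 3 = 1 := by
  rw [show (48:ℕ) = 2^4*3 by norm_num, Nat.factorization_mul (by norm_num) (by norm_num)]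
  rw [Nat.factorization_pow, Nat.Prime.factorization (by norm_num),
    Nat.Prime.factorization (by norm_num)]
  simp

/-- A group of order 48 with a normal Sylow 3-subgroup embeds into `P × S₃`,
where `P` is a Sylow 2-subgroup. -/
theorem order48_embeds_sylow2_prod_S3 (G : Type) [Group G] (hG : Nat.card G = 48)
    (Q : Sylow 3 G) (hQ : (Q : Subgroup G).Normal) (P : Sylow 2 G) :
    ∃ f : G →* (↥(P : Subgroup G) × Equiv.Perm (Fin 3)), Function.Injective f := by
  have hne : Nat.card G ≠ 0 := by rw [hG]; norm_num
  have : Finite G := Nat.finite_of_card_ne_zero hne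
  have hp2 : Fact (Nat.Prime 2) := ⟨by norm_num⟩
  have hp3 : Fact (Nat.Prime 3) := ⟨by norm_num⟩
  have hcardP : Nat.card (P : Subgroup G) = 16 := by
    rw [P.card_eq_multiplicity, hG, fact48_2]; norm_num
  have hcardQ : Nat.card (Q : Subgroup G) = 3 := by
    rw [Q.card_eq_multiplicity, hG, fact48_3, pow_one]
  -- P ⊓ Q = ⊥
  have hinf : (P : Subgroup G) ⊓ (Q : Subgroup G) = ⊥ := by
    apply Subgroup.inf_eq_bot_of_coprime
    rw [hcardP, hcardQ]; norm_num
  -- The quotient map restricted to P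
  let φ : (P : Subgroup G) →* G ⧸ (Q : Subgroup G) :=
    (QuotientGroup.mk' (Q : Subgroup G)).comp (P : Subgroup G).subtype
  have hφinj : Function.Injective φ := by
    rw [← MonoidHom.ker_eq_bot_iff]
    have hker : φ.ker = ((Q : Subgroup G)).subgroupOf (P : Subgroup G) := by
      ext x
      simp [φ, Subgroup.mem_subgroupOf, MonoidHom.mem_ker, QuotientGroup.eq_one_iff]
    rw [hker, Subgroup.subgroupOf_eq_bot]
    exact disjoint_iff.mpr (by rw [inf_comm]; exact hinf)
  have hcardGQ : Nat.card (G ⧸ (Q : Subgroup G)) = 16 := by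
    have := Subgroup.card_eq_card_quotient_mul_card_subgroup (Q : Subgroup G)
    rw [hG, hcardQ] at this
    omega
  have hφbij : Function.Bijective φ := by
    rw [Nat.bijective_iff_injective_and_card]
    exact ⟨hφinj, by rw [hcardP, hcardGQ]⟩
  let e : (P : Subgroup G) ≃* G ⧸ (Q : Subgroup G) := MulEquiv.ofBijective φ hφbij
  let π : G →* (P : Subgroup G) :=
    (e.symm.toMonoidHom).comp (QuotientGroup.mk' (Q : Subgroup G))
  -- Action on cosets of P
  let σ₀ : G →* Equiv.Perm (G ⧸ (P : Subgroup G)) :=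
    MulAction.toPermHom G (G ⧸ (P : Subgroup G))
  have hcardGP : Nat.card (G ⧸ (P : Subgroup G)) = 3 := by
    have := Subgroup.card_eq_card_quotient_mul_card_subgroup (P : Subgroup G)
    rw [hG, hcardP] at this
    omega
  have : Fintype (G ⧸ (P : Subgroup G)) := Fintype.ofFinite _
  have hft : Fintype.card (G ⧸ (P : Subgroup G)) = 3 := by
    rw [← Nat.card_eq_fintype_card]; exact hcardGP
  let ε : (G ⧸ (P : Subgroup G)) ≃ Fin 3 := Fintype.equivFinOfCardEq hft
  let σ : G →* Equiv.Perm (Fin 3) :=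
    (Equiv.Perm.viaEmbeddingHom ε.toEmbedding).comp σ₀
  refine ⟨π.prod σ, ?_⟩
  rw [← MonoidHom.ker_eq_bot_iff, eq_bot_iff]
  intro g hg
  simp only [MonoidHom.mem_ker, MonoidHom.prod_apply, Prod.mk_eq_one] at hg
  obtain ⟨h1, h2⟩ := hg
  -- g ∈ Q from h1
  have hgQ : g ∈ (Q : Subgroup G) := by
    have h1' : QuotientGroup.mk' (Q : Subgroup G) g = 1 := by
      have := (MulEquiv.symm_apply_eq e).mp h1
      simpa using this
    exact (QuotientGroup.eq_one_iff g).mp h1'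
  -- g ∈ P from h2
  have hgP : g ∈ (P : Subgroup G) := by
    have hσ₀ : σ₀ g = 1 := by
      apply Equiv.Perm.viaEmbeddingHom_injective ε.toEmbedding
      rw [map_one]
      exact h2
    have hsmul : g • (QuotientGroup.mk (1 : G) : G ⧸ (P : Subgroup G)) =
        QuotientGroup.mk (1 : G) := by
      have := Equiv.Perm.ext_iff.mp hσ₀ (QuotientGroup.mk (1 : G))
      simpa [σ₀] using this
    have hmk : (QuotientGroup.mk g : G ⧸ (P : Subgroup G)) = QuotientGroup.mk (1 : G) := by
      simpa [MulAction.Quotient.smul_mk] using hsmul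
    have h' := QuotientGroup.eq.mp hmk
    rw [mul_one] at h'
    simpa using inv_mem h'
  have hmem : g ∈ (P : Subgroup G) ⊓ (Q : Subgroup G) := ⟨hgP, hgQ⟩
  rw [hinf] at hmem
  exact hmem
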